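/- Let L ∈ [0,1]^{k×d} and Σ a finite set, Φ ∈ Σ^{k×d}. Assume: no two distinct rows of L are equal (no duplicate actions); every action a ∈ [k] is Pareto optimal, i.e. dim(C_a) = d−1; and the game is locally observable, i.e. for every pair of neighbouring actions (a,b) ∈ E there exist functions w_a, w_b : Σ → ℝ with L_{a,x} − L_{b,x} = w_a(Φ_{a,x}) + w_b(Φ_{b,x}) for all x ∈ [d]. Then for every ν ∈ D and every probability vector q ∈ ℝ^k there exists a probability vector r ∈ ℝ^k such that: (a) (r − q)ᵀ L ν ≤ 0; (b) r_a ≥ q_a / k for all a ∈ [k]; and (c) there exists an in-tree T on [k] with T ⊆ E such that r_a ≤ r_b for all (a,b) ∈ T. -/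

import Mathlib

/-- A directed in-tree on a finite vertex type `V`. -/
structure InTree (V : Type*) [Fintype V] [DecidableEq V] where
  root : V
  par : V → V
  par_root : par root = root
  reaches : ∀ v : V, ∃ n : ℕ, par^[n] v = root

/-- The edge set of an in-tree. -/
def InTree.edges {V : Type*} [Fintype V] [DecidableEq V] (T : InTree V) :
    Finset (V × V) :=
  (Finset.univ.filter (fun v => v ≠ T.root)).image (fun v => (v, T.par v))


def simplexD (d : ℕ) : Set (Fin d → ℝ) :=
  {ν | (∀ x, ν x ∈ Set.Icc (0 : ℝ) 1) ∧ ∑ x, ν x = 1}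

def cell {k d : ℕ} (L : Fin k → Fin d → ℝ) (a : Fin k) : Set (Fin d → ℝ) :=
  {ν ∈ simplexD d | ∀ b : Fin k, ∑ x, L a x * ν x ≤ ∑ x, L b x * ν x}

noncomputable def sdim {d : ℕ} (C : Set (Fin d → ℝ)) : ℕ :=
  Module.finrank ℝ (affineSpan ℝ C).direction

namespace Stmt9Aux

variable {k d : ℕ}

def lossV (L : Fin k → Fin d → ℝ) (a : Fin k) (μ : Fin d → ℝ) : ℝ := ∑ x, L a x * μ x

lemma lossV_combo (L : Fin k → Fin d → ℝ) (a : Fin k) (s t : ℝ) (p q : Fin d → ℝ) :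
    lossV L a (s • p + t • q) = s * lossV L a p + t * lossV L a q := by
  simp only [lossV, Pi.add_apply, Pi.smul_apply, smul_eq_mul, Finset.mul_sum,
    ← Finset.sum_add_distrib]
  apply Finset.sum_congr rfl; intros; ring

lemma continuous_lossV (L : Fin k → Fin d → ℝ) (a : Fin k) : Continuous (lossV L a) := by
  unfold lossV
  exact continuous_finset_sum _ fun x _ => continuous_const.mul (continuous_apply x)

lemma mem_cell_iff {L : Fin k → Fin d → ℝ} {a : Fin k} {x : Fin d → ℝ} :
    x ∈ cell L a ↔ x ∈ simplexD d ∧ ∀ b, lossV L a x ≤ lossV L b x := Iff.rfl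

lemma simplexD_convex : Convex ℝ (simplexD d) := by
  intro x hx y hy s t hs ht hst
  refine ⟨fun i => ?_, ?_⟩
  · have h1 := (hx.1 i); have h2 := (hy.1 i)
    simp only [Set.mem_Icc] at *
    constructor
    · have := add_nonneg (mul_nonneg hs h1.1) (mul_nonneg ht h2.1)
      simpa using this
    · have : s * x i + t * y i ≤ s * 1 + t * 1 := by
        gcongr; exact h1.2; exact h2.2
      simpa [hst] using this
  · have : ∑ i, (s * x i + t * y i) = s * ∑ i, x i + t * ∑ i, y i := by
      rw [Finset.sum_add_distrib, ← Finset.mul_sum, ← Finset.mul_sum]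
    simpa [hx.2, hy.2, hst, this] using this

lemma simplexD_closed : IsClosed (simplexD d) := by
  have : simplexD d = (⋂ x : Fin d, (fun ν : Fin d → ℝ => ν x) ⁻¹' Set.Icc 0 1) ∩
      ((fun ν : Fin d → ℝ => ∑ i, ν i) ⁻¹' {1}) := by
    ext ν; simp [simplexD, Set.mem_iInter]
  rw [this]
  exact (isClosed_iInter fun x => isClosed_Icc.preimage (continuous_apply x)).inter
    (isClosed_singleton.preimage (continuous_finset_sum _ fun i _ => continuous_apply i))

lemma cell_convex (L : Fin k → Fin d → ℝ) (a : Fin k) : Convex ℝ (cell L a) := by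
  intro x hx y hy s t hs ht hst
  refine ⟨simplexD_convex hx.1 hy.1 hs ht hst, fun b => ?_⟩
  show lossV L a _ ≤ lossV L b _
  rw [lossV_combo, lossV_combo]
  exact add_le_add (mul_le_mul_of_nonneg_left (hx.2 b) hs)
    (mul_le_mul_of_nonneg_left (hy.2 b) ht)

lemma cell_closed (L : Fin k → Fin d → ℝ) (a : Fin k) : IsClosed (cell L a) := by
  have : cell L a = simplexD d ∩ ⋂ b : Fin k, {x | lossV L a x ≤ lossV L b x} := by
    ext ν
    constructor
    · rintro ⟨h1, h2⟩
      exact ⟨h1, Set.mem_iInter.2 fun b => h2 b⟩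
    · rintro ⟨h1, h2⟩
      exact ⟨h1, fun b => Set.mem_iInter.1 h2 b⟩
  rw [this]
  exact simplexD_closed.inter (isClosed_iInter fun b =>
    isClosed_le (continuous_lossV L a) (continuous_lossV L b))

lemma exists_cell (hk : 0 < k) (L : Fin k → Fin d → ℝ) {x : Fin d → ℝ} (hx : x ∈ simplexD d) :
    ∃ a, x ∈ cell L a := by
  have : Nonempty (Fin k) := ⟨⟨0, hk⟩⟩
  obtain ⟨a, -, ha⟩ := Finset.exists_min_image Finset.univ (fun b => lossV L b x) Finset.univ_nonempty
  exact ⟨a, hx, fun b => ha b (Finset.mem_univ b)⟩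

end Stmt9Aux


namespace Stmt9Aux
variable {k d : ℕ}

lemma sdim_eq (C : Set (Fin d → ℝ)) : sdim C = Module.finrank ℝ (vectorSpan ℝ C) := by
  rw [sdim, direction_affineSpan]

lemma sdim_empty : sdim (∅ : Set (Fin d → ℝ)) = 0 := by
  rw [sdim_eq, vectorSpan_empty]; simp

lemma vectorSpan_le_ker {W : Type*} [AddCommGroup W] [Module ℝ W]
    (f : (Fin d → ℝ) →ₗ[ℝ] W) (S : Set (Fin d → ℝ)) (c : W) (h : ∀ x ∈ S, f x = c) :
    vectorSpan ℝ S ≤ LinearMap.ker f := by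
  rw [vectorSpan_def, Submodule.span_le]
  rintro v ⟨x, hx, y, hy, rfl⟩
  simp [LinearMap.mem_ker, vsub_eq_sub, map_sub, h x hx, h y hy]

lemma sdim_inter_le (hd : 0 < d) (L : Fin k → Fin d → ℝ) {a b : Fin k} (hab : L a ≠ L b) :
    sdim (cell L a ∩ cell L b) ≤ d - 2 := by
  rcases Set.eq_empty_or_nonempty (cell L a ∩ cell L b) with h | ⟨z, hza, hzb⟩
  · simp [h, sdim_empty]
  set w : Fin d → ℝ := fun x => L a x - L b x with hw
  have hz1 : ∑ x, z x = 1 := hza.1.2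
  have hwz : ∑ x, w x * z x = 0 := by
    have h1 := hza.2 b
    have h2 := hzb.2 a
    have : ∑ x, L a x * z x = ∑ x, L b x * z x := le_antisymm h1 h2
    simp only [hw, sub_mul, Finset.sum_sub_distrib]
    linarith
  have hnc : ∃ i j, w i ≠ w j := by
    by_contra hcon
    push_neg at hcon
    set i0 : Fin d := ⟨0, hd⟩
    have hconst : ∀ x, w x = w i0 := fun x => hcon x i0
    have : ∑ x, w x * z x = w i0 * ∑ x, z x := by
      rw [Finset.mul_sum]
      exact Finset.sum_congr rfl fun x _ => by rw [hconst x]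
    rw [hwz, hz1, mul_one] at this
    apply hab
    funext x
    have := hconst x
    rw [← this] at *
    have hx0 : w x = 0 := by rw [hconst x, ← ‹(0:ℝ) = w i0›]
    exact sub_eq_zero.1 hx0
  obtain ⟨i, j, hij⟩ := hnc
  set F : (Fin d → ℝ) →ₗ[ℝ] ℝ × ℝ :=
    { toFun := fun v => (∑ x, w x * v x, ∑ x, v x)
      map_add' := by
        intro u v
        simp [mul_add, Finset.sum_add_distrib, Prod.ext_iff]
      map_smul' := by
        intro c v
        simp [Finset.mul_sum, Prod.ext_iff, mul_left_comm] } with hF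
  have hmem : ∀ x ∈ cell L a ∩ cell L b, F x = (0, 1) := by
    rintro x ⟨hxa, hxb⟩
    have h1 : ∑ t, L a t * x t = ∑ t, L b t * x t := le_antisymm (hxa.2 b) (hxb.2 a)
    have : ∑ t, w t * x t = 0 := by
      simp only [hw, sub_mul, Finset.sum_sub_distrib]
      linarith
    simp [hF, this, hxa.1.2, Prod.ext_iff]
  -- surjectivity
  have hsum_single : ∀ (u : Fin d → ℝ) (i : Fin d),
      ∑ x, u x * (if x = i then (1:ℝ) else 0) = u i := by
    intro u i
    simp [mul_ite, Finset.sum_ite_eq']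
  have hFδ : ∀ (c1 c2 : ℝ), F (fun y => c1 * (if y = i then 1 else 0) + c2 * (if y = j then 1 else 0))
      = (c1 * w i + c2 * w j, c1 + c2) := by
    intro c1 c2
    have e1 : ∑ x, w x * (c1 * (if x = i then (1:ℝ) else 0) + c2 * (if x = j then 1 else 0))
        = c1 * ∑ x, w x * (if x = i then (1:ℝ) else 0) + c2 * ∑ x, w x * (if x = j then (1:ℝ) else 0) := by
      rw [Finset.mul_sum, Finset.mul_sum, ← Finset.sum_add_distrib]
      exact Finset.sum_congr rfl fun x _ => by ring
    have e2 : ∑ x : Fin d, (c1 * (if x = i then (1:ℝ) else 0) + c2 * (if x = j then 1 else 0))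
        = c1 * ∑ x, (1:ℝ) * (if x = i then (1:ℝ) else 0) + c2 * ∑ x, (1:ℝ) * (if x = j then (1:ℝ) else 0) := by
      rw [Finset.mul_sum, Finset.mul_sum, ← Finset.sum_add_distrib]
      exact Finset.sum_congr rfl fun x _ => by ring
    simp only [hF, LinearMap.coe_mk, AddHom.coe_mk, e1, e2, hsum_single, Prod.ext_iff]
    constructor <;> simp
  have hsurj : Function.Surjective F := by
    rintro ⟨α, β⟩
    set c1 : ℝ := (α - β * w j) / (w i - w j) with hc1
    refine ⟨fun y => c1 * (if y = i then 1 else 0) + (β - c1) * (if y = j then 1 else 0), ?_⟩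
    rw [hFδ]
    have hne : w i - w j ≠ 0 := sub_ne_zero.2 hij
    refine Prod.ext ?_ (by ring)
    show c1 * w i + (β - c1) * w j = α
    rw [hc1]
    field_simp
    ring
  have hrange : LinearMap.range F = ⊤ := LinearMap.range_eq_top.2 hsurj
  have hker : Module.finrank ℝ (LinearMap.ker F) = d - 2 := by
    have h1 := LinearMap.finrank_range_add_finrank_ker F
    rw [hrange] at h1
    rw [finrank_top] at h1
    have h2 : Module.finrank ℝ (ℝ × ℝ) = 2 := by
      simp [Module.finrank_prod]
    have h3 : Module.finrank ℝ (Fin d → ℝ) = d := by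
      simp [Module.finrank_pi]
    omega
  rw [sdim_eq]
  calc Module.finrank ℝ (vectorSpan ℝ (cell L a ∩ cell L b))
      ≤ Module.finrank ℝ (LinearMap.ker F) :=
        Submodule.finrank_mono (vectorSpan_le_ker F _ _ hmem)
    _ = d - 2 := hker

end Stmt9Aux

namespace Stmt9Aux
variable {d : ℕ}

lemma infinite_segment {x y : Fin d → ℝ} (h : x ≠ y) : (segment ℝ x y).Infinite := by
  rw [segment_eq_image']
  apply Set.Infinite.image ?_ (Set.Icc_infinite (by norm_num : (0:ℝ) < 1))
  intro s hs t ht hst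
  have h0 : y - x ≠ 0 := sub_ne_zero.2 (Ne.symm h)
  have : s • (y - x) = t • (y - x) := by simpa [add_right_inj] using hst
  exact smul_left_injective ℝ h0 this

lemma mem_affineSpan_pair_of_combo {A : AffineSubspace ℝ (Fin d → ℝ)} {u v z : Fin d → ℝ}
    (hu : u ∈ A) (hv : v ∈ A) {c : ℝ} (hz : z = c • (u - v) + v) : z ∈ A := by
  have := AffineSubspace.smul_vsub_vadd_mem A c hu hv hv
  simpa [vsub_eq_sub, vadd_eq_add, ← hz] using this

/-- A nonempty convex set covered by finitely many affine subspaces lies in one of them. -/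
lemma convex_cover {ι : Type*} [DecidableEq ι] (s : Finset ι)
    (S : ι → AffineSubspace ℝ (Fin d → ℝ)) (C : Set (Fin d → ℝ))
    (hC : Convex ℝ C) (hne : C.Nonempty)
    (hcov : ∀ x ∈ C, ∃ i ∈ s, x ∈ S i) : ∃ i ∈ s, C ⊆ (S i : Set (Fin d → ℝ)) := by
  classical
  induction s using Finset.strongInduction with
  | _ s ih =>
    by_cases hex : ∃ i ∈ s, C ⊆ (S i : Set (Fin d → ℝ))
    · exact hex
    push_neg at hex
    obtain ⟨x0, hx0⟩ := hne
    obtain ⟨i0, hi0s, _⟩ := hcov x0 hx0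
    obtain ⟨x, hxC, hxi0⟩ : ∃ x ∈ C, x ∉ S i0 := by
      have := hex i0 hi0s
      rw [Set.not_subset] at this
      exact this
    set t : Finset ι := s.filter (fun i => x ∈ S i) with ht
    have hts : t ⊂ s := by
      refine Finset.ssubset_iff_of_subset (Finset.filter_subset _ _) |>.2 ?_
      exact ⟨i0, hi0s, by simp [ht, hxi0]⟩
    have hcovt : ∀ y ∈ C, ∃ i ∈ t, y ∈ S i := by
      intro y hyC
      by_cases hxy : x = y
      · obtain ⟨i, his, hyi⟩ := hcov y hyC
        exact ⟨i, by simp [ht, his, hxy ▸ hyi], hyi⟩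
      · have hseg : segment ℝ x y ⊆ C := hC.segment_subset hxC hyC
        have hinf : (segment ℝ x y).Infinite := infinite_segment hxy
        set f : (Fin d → ℝ) → ι := fun z =>
          if h : ∃ i ∈ s, z ∈ S i then h.choose else i0 with hf
        have hmaps : Set.MapsTo f (segment ℝ x y) (s : Set ι) := by
          intro z hz
          have hzc := hcov z (hseg hz)
          simp only [hf, dif_pos hzc]
          exact hzc.choose_spec.1
        obtain ⟨u, hu, v, hv, huv, hfuv⟩ :=
          hinf.exists_ne_map_eq_of_mapsTo hmaps (s : Set ι).toFinite
        set i : ι := f u with hi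
        have hui : u ∈ S i ∧ i ∈ s := by
          have hc := hcov u (hseg hu)
          constructor
          · simp only [hi, hf, dif_pos hc]; exact hc.choose_spec.2
          · simp only [hi, hf, dif_pos hc]; exact hc.choose_spec.1
        have hvi : v ∈ S i := by
          have hc := hcov v (hseg hv)
          have : v ∈ S (f v) := by simp only [hf, dif_pos hc]; exact hc.choose_spec.2
          rwa [← hfuv] at this
        rw [segment_eq_image'] at hu hv
        obtain ⟨σ, hσ, huσ⟩ := hu
        obtain ⟨τ, hτ, hvτ⟩ := hv
        have hστ : σ ≠ τ := fun hc => huv (by rw [← huσ, ← hvτ, hc])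
        have hne2 : τ - σ ≠ 0 := sub_ne_zero.2 (Ne.symm hστ)
        have hxSi : x ∈ S i := by
          refine mem_affineSpan_pair_of_combo hui.1 hvi (c := τ/(τ-σ)) ?_
          rw [← huσ, ← hvτ]
          simp only
          match_scalars <;> field_simp <;> ring
        have hySi : y ∈ S i := by
          refine mem_affineSpan_pair_of_combo hui.1 hvi (c := (τ-1)/(τ-σ)) ?_
          rw [← huσ, ← hvτ]
          simp only
          match_scalars <;> field_simp <;> ring
        exact ⟨i, Finset.mem_filter.2 ⟨hui.2, hxSi⟩, hySi⟩
    obtain ⟨i, hit, hCi⟩ := ih t hts hcovt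
    exact absurd hCi (hex i (Finset.filter_subset _ _ hit))

lemma sdim_insert_le (μ : Fin d → ℝ) (X : Set (Fin d → ℝ)) :
    Module.finrank ℝ (vectorSpan ℝ (insert μ X)) ≤ Module.finrank ℝ (vectorSpan ℝ X) + 1 := by
  rcases Set.eq_empty_or_nonempty X with h | ⟨x0, hx0⟩
  · rw [h]
    have : insert μ (∅ : Set (Fin d → ℝ)) = {μ} := by ext z; simp
    rw [this, vectorSpan_singleton]
    simp
  · have hle : vectorSpan ℝ (insert μ X) ≤ vectorSpan ℝ X ⊔ Submodule.span ℝ {μ - x0} := by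
      rw [vectorSpan_def, Submodule.span_le]
      rintro w ⟨p, hp, q, hq, rfl⟩
      have key : ∀ z ∈ insert μ X, ∃ v ∈ (vectorSpan ℝ X ⊔ Submodule.span ℝ {μ - x0} : Submodule ℝ _), z = v + x0 := by
        rintro z (rfl | hz)
        · exact ⟨z - x0, Submodule.mem_sup_right (Submodule.subset_span rfl), by abel⟩
        · exact ⟨z - x0, Submodule.mem_sup_left (vsub_mem_vectorSpan ℝ hz hx0), by abel⟩
      obtain ⟨vp, hvp, hp'⟩ := key p hp
      obtain ⟨vq, hvq, hq'⟩ := key q hq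
      have heq : p -ᵥ q = vp - vq := by rw [hp', hq', vsub_eq_sub]; abel
      show p -ᵥ q ∈ _
      rw [heq]
      exact Submodule.sub_mem _ hvp hvq
    calc Module.finrank ℝ (vectorSpan ℝ (insert μ X))
        ≤ Module.finrank ℝ (vectorSpan ℝ X ⊔ Submodule.span ℝ {μ - x0} : Submodule ℝ _) :=
          Submodule.finrank_mono hle
      _ ≤ Module.finrank ℝ (vectorSpan ℝ X) + Module.finrank ℝ (Submodule.span ℝ {μ - x0}) := by
          have := Submodule.finrank_sup_add_finrank_inf_eq (vectorSpan ℝ X) (Submodule.span ℝ {μ - x0})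
          omega
      _ ≤ Module.finrank ℝ (vectorSpan ℝ X) + 1 := by
          have : Module.finrank ℝ (Submodule.span ℝ ({μ - x0} : Set (Fin d → ℝ))) ≤ 1 := by
            by_cases h0 : μ - x0 = 0
            · rw [h0, Submodule.span_zero_singleton]
              simp
            · rw [finrank_span_singleton h0]
          omega
end Stmt9Aux

def Neighbours {k d : ℕ} (L : Fin k → Fin d → ℝ) (a b : Fin k) : Prop :=
  a ≠ b ∧ sdim (cell L a) = d - 1 ∧ sdim (cell L b) = d - 1 ∧
    sdim (cell L a ∩ cell L b) = d - 2

namespace Stmt9Aux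
variable {k d : ℕ}

lemma star (hk : 0 < k) (hd : 0 < d) (L : Fin k → Fin d → ℝ)
    (hdup : ∀ a b : Fin k, a ≠ b → L a ≠ L b)
    (hpareto : ∀ a : Fin k, sdim (cell L a) = d - 1)
    {μ : Fin d → ℝ} (hμ : μ ∈ simplexD d)
    (hinj : ∀ a b : Fin k, a ≠ b → lossV L a μ ≠ lossV L b μ)
    (a : Fin k) (ha : ∃ c, lossV L c μ < lossV L a μ) :
    ∃ b, Neighbours L a b ∧ lossV L b μ < lossV L a μ := by
  classical
  rcases le_or_gt d 2 with hd2 | hd3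
  · obtain ⟨c, hc⟩ := ha
    have hac : a ≠ c := fun h => absurd hc (by rw [h]; exact lt_irrefl _)
    refine ⟨c, ⟨hac, hpareto a, hpareto c, ?_⟩, hc⟩
    have h1 := sdim_inter_le hd L (hdup a c hac)
    omega
  · set N : Finset (Fin k) := Finset.univ.filter
      (fun c => c ≠ a ∧ sdim (cell L a ∩ cell L c) ≠ d - 2) with hN
    have hCane : (cell L a).Nonempty := by
      rcases Set.eq_empty_or_nonempty (cell L a) with h | h
      · exfalso; have h4 := hpareto a; rw [h, sdim_empty] at h4; omega
      · exact h
    obtain ⟨p, hpCa, hp⟩ : ∃ p ∈ cell L a, ∀ c ∈ N,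
        p ∉ affineSpan ℝ (insert μ (cell L a ∩ cell L c)) := by
      by_contra hcon
      push_neg at hcon
      obtain ⟨c, hcN, hsub⟩ := convex_cover N
        (fun c => affineSpan ℝ (insert μ (cell L a ∩ cell L c)))
        (cell L a) (cell_convex L a) hCane hcon
      have h1 : sdim (cell L a) ≤ sdim (insert μ (cell L a ∩ cell L c)) := by
        rw [sdim_eq, sdim_eq]
        refine Submodule.finrank_mono ?_
        rw [← direction_affineSpan ℝ (insert μ (cell L a ∩ cell L c)),
          ← direction_affineSpan ℝ (cell L a)]
        exact AffineSubspace.direction_le (affineSpan_le.2 hsub)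
      have hcprop : c ≠ a ∧ sdim (cell L a ∩ cell L c) ≠ d - 2 := by
        simpa [hN] using hcN
      have h2 : sdim (insert μ (cell L a ∩ cell L c)) ≤ sdim (cell L a ∩ cell L c) + 1 := by
        rw [sdim_eq, sdim_eq]
        exact sdim_insert_le μ (cell L a ∩ cell L c)
      have h3 : sdim (cell L a ∩ cell L c) ≤ d - 2 :=
        sdim_inter_le hd L (hdup a c (Ne.symm hcprop.1))
      have h4 := hpareto a
      have h5 := hcprop.2
      omega
    -- segment from p towards μ
    set sg : ℝ → (Fin d → ℝ) := fun t => (1-t) • p + t • μ with hsg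
    have hsgcont : Continuous sg := by
      apply Continuous.add
      · exact (continuous_const.sub continuous_id).smul continuous_const
      · exact continuous_id.smul continuous_const
    have hsgD : ∀ t, 0 ≤ t → t ≤ 1 → sg t ∈ simplexD d := by
      intro t h0 h1
      exact simplexD_convex hpCa.1 hμ (by linarith) h0 (by ring)
    set K : Set ℝ := Set.Icc (0:ℝ) 1 ∩ sg ⁻¹' (cell L a) with hK
    have hKne : K.Nonempty := by
      refine ⟨0, ⟨Set.left_mem_Icc.2 zero_le_one, ?_⟩⟩
      show sg 0 ∈ cell L a
      have : sg 0 = p := by rw [hsg]; simp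
      rw [this]; exact hpCa
    have hKcompact : IsCompact K := by
      apply isCompact_Icc.of_isClosed_subset
      · exact isClosed_Icc.inter ((cell_closed L a).preimage hsgcont)
      · exact Set.inter_subset_left
    obtain ⟨t0, ht0K, ht0ub⟩ := hKcompact.exists_isGreatest hKne
    obtain ⟨⟨ht00, ht0le1⟩, ht0cell⟩ := ht0K
    obtain ⟨c0, hc0⟩ := ha
    have hsg1 : sg 1 = μ := by rw [hsg]; simp
    have hμa : sg 1 ∉ cell L a := by
      rw [hsg1]; intro hmem; exact absurd (hmem.2 c0) (not_le.2 hc0)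
    have ht01 : t0 < 1 := by
      rcases lt_or_eq_of_le ht0le1 with h | h
      · exact h
      · exact absurd (h ▸ ht0cell) hμa
    set Bad : Finset (Fin k) := Finset.univ.filter
      (fun b => b ≠ a ∧ sg t0 ∉ cell L b) with hBad
    set U : Set ℝ := ⋃ b ∈ Bad, {t | sg t ∈ cell L b} with hU
    have hUclosed : IsClosed U := by
      apply Set.Finite.isClosed_biUnion (Bad.finite_toSet)
      intro b _
      exact (cell_closed L b).preimage hsgcont
    have ht0U : t0 ∉ U := by
      intro hmem
      rw [hU, Set.mem_iUnion₂] at hmem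
      obtain ⟨b, hb, hmem⟩ := hmem
      have : b ≠ a ∧ sg t0 ∉ cell L b := by simpa [hBad] using hb
      exact this.2 hmem
    have ht0cl : t0 ∈ closure (Set.Ioc t0 1) := by
      rw [closure_Ioc (ne_of_lt ht01)]
      exact ⟨le_refl t0, le_of_lt ht01⟩
    obtain ⟨t1, ht1, ht1U⟩ : ∃ t1 ∈ Set.Ioc t0 1, t1 ∉ U := by
      by_contra hcon
      push_neg at hcon
      have hsub : Set.Ioc t0 1 ⊆ U := hcon
      have : t0 ∈ U := by
        have h5 := closure_mono hsub ht0cl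
        rwa [hUclosed.closure_eq] at h5
      exact ht0U this
    have ht1D : sg t1 ∈ simplexD d := hsgD t1 (le_trans ht00 (le_of_lt ht1.1)) ht1.2
    obtain ⟨b, hbmem⟩ := exists_cell hk L ht1D
    have hba : b ≠ a := by
      intro h
      rw [h] at hbmem
      have ht1K : t1 ∈ K := ⟨⟨le_trans ht00 (le_of_lt ht1.1), ht1.2⟩, hbmem⟩
      exact absurd (ht0ub ht1K) (not_le.2 ht1.1)
    have hbBad : b ∉ Bad := fun hb => ht1U (by
      rw [hU, Set.mem_iUnion₂]; exact ⟨b, hb, hbmem⟩)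
    have hbt0 : sg t0 ∈ cell L b := by
      by_contra hno
      exact hbBad (by simp [hBad, hba, hno])
    -- loss inequalities
    have haff : ∀ (c' : Fin k) (t : ℝ),
        lossV L c' (sg t) = (1-t) * lossV L c' p + t * lossV L c' μ := by
      intro c' t
      rw [hsg]
      exact lossV_combo L c' (1-t) t p μ
    have hlosst0 : lossV L a (sg t0) = lossV L b (sg t0) :=
      le_antisymm (ht0cell.2 b) (hbt0.2 a)
    have hbt1le : lossV L b (sg t1) ≤ lossV L a (sg t1) := hbmem.2 a
    have hkey : lossV L b μ ≤ lossV L a μ := by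
      set A : ℝ := lossV L a p - lossV L b p with hA
      set B : ℝ := lossV L a μ - lossV L b μ with hB
      have h1 : (1-t0)*A + t0*B = 0 := by
        have := hlosst0
        rw [haff a t0, haff b t0] at this
        rw [hA, hB]; linarith
      have h2 : 0 ≤ (1-t1)*A + t1*B := by
        have := hbt1le
        rw [haff a t1, haff b t1] at this
        rw [hA, hB]; linarith
      by_contra hcon
      push_neg at hcon
      have hBneg : B < 0 := by rw [hB]; linarith
      have e1 : (1 - t1) * ((1-t0)*A + t0*B) = 0 := by rw [h1]; ring
      have e2 : 0 ≤ (1 - t0) * ((1-t1)*A + t1*B) := mul_nonneg (by linarith) h2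
      nlinarith [e1, e2, mul_pos (sub_pos.2 ht1.1) (neg_pos.2 hBneg)]
    have hblt : lossV L b μ < lossV L a μ := lt_of_le_of_ne hkey (hinj b a hba)
    have hbN : b ∉ N := by
      intro hbN
      apply hp b hbN
      have hmem1 : sg t0 ∈ affineSpan ℝ (insert μ (cell L a ∩ cell L b)) :=
        subset_affineSpan ℝ _ (Set.mem_insert_of_mem _ ⟨ht0cell, hbt0⟩)
      have hmem2 : μ ∈ affineSpan ℝ (insert μ (cell L a ∩ cell L b)) :=
        subset_affineSpan ℝ _ (Set.mem_insert _ _)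
      have h10 : (1:ℝ) - t0 ≠ 0 := by intro h; linarith [(sub_eq_zero.1 h).symm]
      refine mem_affineSpan_pair_of_combo hmem1 hmem2 (c := (1-t0)⁻¹) ?_
      rw [hsg]
      simp only
      match_scalars <;> field_simp <;> ring
    have hsd : sdim (cell L a ∩ cell L b) = d - 2 := by
      have h3 : sdim (cell L a ∩ cell L b) ≤ d - 2 :=
        sdim_inter_le hd L (hdup a b (Ne.symm hba))
      by_contra hne
      exact hbN (by simp [hN, hba, hne])
    exact ⟨b, ⟨Ne.symm hba, hpareto a, hpareto b, hsd⟩, hblt⟩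

end Stmt9Aux

namespace Stmt9Aux
variable {k d : ℕ}

/-- The loss functional as a linear map. -/
def lossL (L : Fin k → Fin d → ℝ) (a : Fin k) : (Fin d → ℝ) →ₗ[ℝ] ℝ where
  toFun := fun v => ∑ x, L a x * v x
  map_add' := by intro u v; simp [mul_add, Finset.sum_add_distrib]
  map_smul' := by intro c v; simp [Finset.mul_sum, mul_left_comm]

lemma lossL_apply (L : Fin k → Fin d → ℝ) (a : Fin k) (v : Fin d → ℝ) :
    lossL L a v = lossV L a v := rfl

lemma exists_generic (hd : 0 < d) (L : Fin k → Fin d → ℝ)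
    (hdup : ∀ a b : Fin k, a ≠ b → L a ≠ L b) :
    ∃ ν' ∈ simplexD d, ∀ a b : Fin k, a ≠ b → lossV L a ν' ≠ lossV L b ν' := by
  classical
  set P : Finset (Fin k × Fin k) := Finset.univ.filter (fun pr => pr.1 ≠ pr.2) with hP
  set H : Fin k × Fin k → AffineSubspace ℝ (Fin d → ℝ) := fun pr =>
    (LinearMap.ker (lossL L pr.1 - lossL L pr.2)).toAffineSubspace with hH
  by_contra hcon
  push_neg at hcon
  have hsimplexne : (simplexD d).Nonempty := by
    refine ⟨fun y => if y = ⟨0, hd⟩ then 1 else 0, fun i => ?_, ?_⟩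
    · by_cases h : i = ⟨0, hd⟩ <;> simp [h]
    · simp [Finset.sum_ite_eq']
  have hcov : ∀ x ∈ simplexD d, ∃ pr ∈ P, x ∈ H pr := by
    intro x hx
    obtain ⟨a, b, hab, heq⟩ := hcon x hx
    refine ⟨(a, b), by simp [hP, hab], ?_⟩
    show x ∈ LinearMap.ker (lossL L a - lossL L b)
    rw [LinearMap.mem_ker, LinearMap.sub_apply, lossL_apply, lossL_apply, sub_eq_zero]
    exact heq
  obtain ⟨⟨a, b⟩, hPab, hsub⟩ := convex_cover P H (simplexD d) simplexD_convex hsimplexne hcov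
  have hab : a ≠ b := by simpa [hP] using hPab
  apply hdup a b hab
  funext x
  have hex : (fun y => if y = x then (1:ℝ) else 0) ∈ simplexD d := by
    refine ⟨fun i => ?_, ?_⟩
    · by_cases h : i = x <;> simp [h]
    · simp [Finset.sum_ite_eq']
  have := hsub hex
  have hker : lossV L a (fun y => if y = x then (1:ℝ) else 0)
      = lossV L b (fun y => if y = x then (1:ℝ) else 0) := by
    have h2 : (fun y => if y = x then (1:ℝ) else 0) ∈
        LinearMap.ker (lossL L a - lossL L b) := this
    rw [LinearMap.mem_ker, LinearMap.sub_apply, lossL_apply, lossL_apply, sub_eq_zero] at h2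
    exact h2
  simpa [lossV, mul_ite, Finset.sum_ite_eq'] using hker

lemma exists_mu (hd : 0 < d) (L : Fin k → Fin d → ℝ)
    (hdup : ∀ a b : Fin k, a ≠ b → L a ≠ L b)
    {ν : Fin d → ℝ} (hν : ν ∈ simplexD d) :
    ∃ μ ∈ simplexD d, (∀ a b : Fin k, a ≠ b → lossV L a μ ≠ lossV L b μ) ∧
      (∀ a b : Fin k, lossV L a ν < lossV L b ν → lossV L a μ < lossV L b μ) := by
  classical
  obtain ⟨ν', hν'D, hν'⟩ := exists_generic hd L hdup
  set μf : ℝ → (Fin d → ℝ) := fun ε => (1-ε) • ν + ε • ν' with hμf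
  have hμloss : ∀ (a : Fin k) (ε : ℝ), lossV L a (μf ε)
      = (1-ε) * lossV L a ν + ε * lossV L a ν' := fun a ε => lossV_combo L a _ _ ν ν'
  have hQ : ∀ pr : Fin k × Fin k, ∀ᶠ ε in nhdsWithin (0:ℝ) (Set.Ioi 0),
      (pr.1 ≠ pr.2 → lossV L pr.1 (μf ε) ≠ lossV L pr.2 (μf ε)) ∧
      (lossV L pr.1 ν < lossV L pr.2 ν → lossV L pr.1 (μf ε) < lossV L pr.2 (μf ε)) := by
    rintro ⟨a, b⟩
    have hcontg : ContinuousAt (fun ε : ℝ =>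
        ((1-ε) * lossV L a ν + ε * lossV L a ν') -
        ((1-ε) * lossV L b ν + ε * lossV L b ν')) 0 := by fun_prop
    have hQ1 : ∀ᶠ ε in nhdsWithin (0:ℝ) (Set.Ioi 0),
        (a ≠ b → lossV L a (μf ε) ≠ lossV L b (μf ε)) := by
      by_cases hab : a = b
      · filter_upwards with ε h; exact absurd hab h
      by_cases hne : lossV L a ν = lossV L b ν
      · -- use ε > 0 and distinctness at ν'
        filter_upwards [self_mem_nhdsWithin] with ε hε _ heq
        rw [hμloss, hμloss, hne] at heq
        have : ε * lossV L a ν' = ε * lossV L b ν' := by linarith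
        have hεne : ε ≠ 0 := ne_of_gt hε
        exact hν' a b hab (mul_left_cancel₀ hεne this)
      · -- continuity
        have h0 : ((1-(0:ℝ)) * lossV L a ν + 0 * lossV L a ν') -
            ((1-(0:ℝ)) * lossV L b ν + 0 * lossV L b ν') ≠ 0 := by
          simpa [sub_eq_zero] using hne
        have h2 := (hcontg.eventually_ne h0).filter_mono
          (nhdsWithin_le_nhds (a := (0:ℝ)) (s := Set.Ioi 0))
        filter_upwards [h2] with ε hεne _ heq
        apply hεne
        rw [hμloss, hμloss] at heq
        rw [heq, sub_self]
    have hQ2 : ∀ᶠ ε in nhdsWithin (0:ℝ) (Set.Ioi 0),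
        (lossV L a ν < lossV L b ν → lossV L a (μf ε) < lossV L b (μf ε)) := by
      by_cases hlt : lossV L a ν < lossV L b ν
      · have h0 : ((1-(0:ℝ)) * lossV L a ν + 0 * lossV L a ν') -
            ((1-(0:ℝ)) * lossV L b ν + 0 * lossV L b ν') < 0 := by simpa using hlt
        have hev : ∀ᶠ ε in nhds (0:ℝ),
            ((1-ε) * lossV L a ν + ε * lossV L a ν') -
            ((1-ε) * lossV L b ν + ε * lossV L b ν') < 0 :=
          Filter.Tendsto.eventually_lt_const h0 hcontg
        have h2 := hev.filter_mono (nhdsWithin_le_nhds (a := (0:ℝ)) (s := Set.Ioi 0))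
        filter_upwards [h2] with ε hεlt _
        rw [hμloss, hμloss]
        linarith
      · filter_upwards with ε h; exact absurd h hlt
    exact hQ1.and hQ2
  have hev1 : ∀ᶠ ε in nhdsWithin (0:ℝ) (Set.Ioi 0), 0 < ε := by
    filter_upwards [self_mem_nhdsWithin] with ε hε
    exact hε
  have hev2 : ∀ᶠ ε in nhdsWithin (0:ℝ) (Set.Ioi 0), ε < 1 := by
    have h1 : ∀ᶠ ε in nhds (0:ℝ), ε ∈ Set.Iio (1:ℝ) :=
      isOpen_Iio.eventually_mem (by norm_num)
    have h2 := h1.filter_mono (nhdsWithin_le_nhds (a := (0:ℝ)) (s := Set.Ioi 0))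
    filter_upwards [h2] with ε hε
    exact hε
  have hall := (((Finset.eventually_all (Finset.univ : Finset (Fin k × Fin k))).2
    fun pr _ => hQ pr).and (hev1.and hev2))
  have : (nhdsWithin (0:ℝ) (Set.Ioi 0)).NeBot := nhdsGT_neBot 0
  obtain ⟨ε, hA, hpos, hlt1⟩ := hall.exists
  refine ⟨μf ε, ?_, ?_, ?_⟩
  · exact simplexD_convex hν hν'D (by linarith) (le_of_lt hpos) (by ring)
  · intro a b hab
    exact (hA (a,b) (Finset.mem_univ _)).1 hab
  · intro a b hlt
    exact (hA (a,b) (Finset.mem_univ _)).2 hlt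
end Stmt9Aux

namespace Stmt9Aux
variable {k : ℕ}

lemma build_tree (hk : 0 < k) (P : Fin k → Fin k → Prop) (f : Fin k → ℝ) (a0 : Fin k)
    (h : ∀ a, a ≠ a0 → ∃ b, P a b ∧ f b < f a) :
    ∃ T : InTree (Fin k), T.root = a0 ∧
      ∀ v, v ≠ a0 → P v (T.par v) ∧ f (T.par v) < f v := by
  classical
  set par : Fin k → Fin k := fun a => if h' : a = a0 then a0 else (h a h').choose with hpar
  have hspec : ∀ a, a ≠ a0 → P a (par a) ∧ f (par a) < f a := by
    intro a ha
    rw [hpar]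
    simp only [dif_neg ha]
    exact (h a ha).choose_spec
  have hroot : par a0 = a0 := by simp [hpar]
  have hreach : ∀ a, ∃ n, par^[n] a = a0 := by
    have key : ∀ (n : ℕ) (a : Fin k),
        (Finset.univ.filter (fun c => f c < f a)).card ≤ n → ∃ m, par^[m] a = a0 := by
      intro n
      induction n with
      | zero =>
        intro a hcard
        by_cases ha : a = a0
        · exact ⟨0, ha⟩
        · exfalso
          obtain ⟨-, hf⟩ := hspec a ha
          have : par a ∈ Finset.univ.filter (fun c => f c < f a) := by
            simp [hf]
          have := Finset.card_pos.2 ⟨par a, this⟩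
          omega
      | succ n ih =>
        intro a hcard
        by_cases ha : a = a0
        · exact ⟨0, ha⟩
        · obtain ⟨-, hf⟩ := hspec a ha
          have hss : (Finset.univ.filter (fun c => f c < f (par a))) ⊂
              (Finset.univ.filter (fun c => f c < f a)) := by
            refine Finset.ssubset_iff_of_subset ?_ |>.2 ⟨par a, by simp [hf], by simp⟩
            intro c hc
            simp only [Finset.mem_filter, Finset.mem_univ, true_and] at *
            linarith
          have hcard' : (Finset.univ.filter (fun c => f c < f (par a))).card ≤ n := by
            have := Finset.card_lt_card hss
            omega
          obtain ⟨m, hm⟩ := ih (par a) hcard'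
          exact ⟨m + 1, by rw [Function.iterate_succ_apply, hm]⟩
    exact fun a => key _ a (le_refl _)
  exact ⟨⟨a0, par, hroot, hreach⟩, rfl, hspec⟩

lemma mem_edges_iff {T : InTree (Fin k)} {e : Fin k × Fin k} :
    e ∈ T.edges ↔ ∃ v, v ≠ T.root ∧ e = (v, T.par v) := by
  unfold InTree.edges
  simp only [Finset.mem_image, Finset.mem_filter, Finset.mem_univ, true_and]
  constructor
  · rintro ⟨v, hv, rfl⟩; exact ⟨v, hv, rfl⟩
  · rintro ⟨v, hv, rfl⟩; exact ⟨v, hv, rfl⟩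

end Stmt9Aux

open Stmt9Aux in
theorem stmt9 (k d : ℕ) (hk : 0 < k) (hd : 0 < d) (S : Type*) [Fintype S]
    (L : Fin k → Fin d → ℝ) (hL : ∀ a x, L a x ∈ Set.Icc (0 : ℝ) 1)
    (Φ : Fin k → Fin d → S)
    (hdup : ∀ a b : Fin k, a ≠ b → L a ≠ L b)
    (hpareto : ∀ a : Fin k, sdim (cell L a) = d - 1)
    (hlocal : ∀ a b : Fin k, Neighbours L a b →
      ∃ wa wb : S → ℝ, ∀ x, L a x - L b x = wa (Φ a x) + wb (Φ b x)) :
    ∀ ν ∈ simplexD d, ∀ q : Fin k → ℝ, (∀ a, 0 ≤ q a) → (∑ a, q a = 1) →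
      ∃ r : Fin k → ℝ, (∀ a, 0 ≤ r a) ∧ (∑ a, r a = 1) ∧
        (∑ a, (r a - q a) * ∑ x, L a x * ν x) ≤ 0 ∧
        (∀ a, q a / k ≤ r a) ∧
        ∃ T : InTree (Fin k),
          (∀ e ∈ T.edges, Neighbours L e.1 e.2) ∧
          (∀ e ∈ T.edges, r e.1 ≤ r e.2) := by
  classical
  intro ν hν q hq hqs
  obtain ⟨μ, hμD, hinj, hord⟩ := exists_mu hd L hdup hν
  have hkn : Nonempty (Fin k) := ⟨⟨0, hk⟩⟩
  obtain ⟨a0, -, ha0⟩ := Finset.exists_min_image Finset.univ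
    (fun b => lossV L b μ) Finset.univ_nonempty
  have hstrict : ∀ a, a ≠ a0 → lossV L a0 μ < lossV L a μ := fun a ha =>
    lt_of_le_of_ne (ha0 a (Finset.mem_univ a)) (hinj a0 a (Ne.symm ha))
  obtain ⟨T, hTroot, hTspec⟩ := build_tree hk (Neighbours L) (fun a => lossV L a μ) a0
    (fun a ha => star hk hd L hdup hpareto hμD hinj a ⟨a0, hstrict a ha⟩)
  rw [← hTroot] at hTspec
  set rt : Fin k := T.root with hrtdef
  set par : Fin k → Fin k := T.par with hpardef
  set ℓ : Fin k → ℝ := fun a => lossV L a ν with hℓ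
  -- monotonicity of ℓ along the tree
  have hmono : ∀ v, ℓ (par v) ≤ ℓ v := by
    intro v
    by_cases hv : v = rt
    · rw [hv, hpardef, T.par_root]
    · rcases le_or_gt (ℓ (par v)) (ℓ v) with h | h
      · exact h
      · exact absurd (hTspec v hv).2 (not_lt.2 (le_of_lt (hord v (par v) h)))
  have hpath : ∀ (n : ℕ) (v : Fin k), ℓ (par^[n] v) ≤ ℓ v := by
    intro n
    induction n with
    | zero => intro v; exact le_refl _
    | succ n ih =>
      intro v
      rw [Function.iterate_succ_apply']
      exact le_trans (hmono _) (ih v)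
  have hroot_le : ∀ v, ℓ rt ≤ ℓ v := by
    intro v
    obtain ⟨n, hn⟩ := T.reaches v
    calc ℓ rt = ℓ (par^[n] v) := by rw [hn]
      _ ≤ ℓ v := hpath n v
  -- the water transfer vector r
  set B : Fin k → Finset (Fin k) :=
    fun a => Finset.univ.filter (fun b => ∃ n, par^[n] b = a) with hB
  set cf : Fin k → ℝ := fun a => (1/(k:ℝ)) * ∑ b ∈ B a, q b with hcf
  set r : Fin k → ℝ :=
    fun a => if a = rt then 1 - ∑ c ∈ Finset.univ.erase rt, cf c else cf a with hr
  have hkpos : (0:ℝ) < k := by exact_mod_cast hk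
  have hcnonneg : ∀ a, 0 ≤ cf a := fun a =>
    mul_nonneg (by positivity) (Finset.sum_nonneg fun b _ => hq b)
  have hcle : ∀ a, cf a ≤ 1/(k:ℝ) := by
    intro a
    have h1 : ∑ b ∈ B a, q b ≤ ∑ b, q b :=
      Finset.sum_le_sum_of_subset_of_nonneg (Finset.subset_univ _) (fun i _ _ => hq i)
    rw [hqs] at h1
    calc cf a ≤ (1/(k:ℝ)) * 1 := mul_le_mul_of_nonneg_left h1 (by positivity)
      _ = 1/(k:ℝ) := mul_one _
  have hcard_erase : (Finset.univ.erase rt).card = k - 1 := by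
    rw [Finset.card_erase_of_mem (Finset.mem_univ rt), Finset.card_univ, Fintype.card_fin]
  have hS : ∑ c ∈ Finset.univ.erase rt, cf c ≤ 1 - 1/(k:ℝ) := by
    have h1 := Finset.sum_le_card_nsmul (Finset.univ.erase rt) cf (1/(k:ℝ)) (fun x _ => hcle x)
    rw [hcard_erase, nsmul_eq_mul] at h1
    have hcast : ((k - 1 : ℕ) : ℝ) = (k:ℝ) - 1 := by
      rw [Nat.cast_sub hk, Nat.cast_one]
    rw [hcast] at h1
    have : ((k:ℝ) - 1) * (1/(k:ℝ)) = 1 - 1/(k:ℝ) := by field_simp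
    linarith
  have hrrt : r rt = 1 - ∑ c ∈ Finset.univ.erase rt, cf c := by rw [hr]; simp
  have hrne : ∀ a, a ≠ rt → r a = cf a := by intro a ha; rw [hr]; simp [ha]
  have hrroot_ge : 1/(k:ℝ) ≤ r rt := by rw [hrrt]; linarith
  have hrnonneg : ∀ a, 0 ≤ r a := by
    intro a
    by_cases ha : a = rt
    · rw [ha]; have : (0:ℝ) < 1/(k:ℝ) := by positivity
      linarith
    · rw [hrne a ha]; exact hcnonneg a
  have hsumr : ∑ a, r a = 1 := by
    rw [← Finset.add_sum_erase _ r (Finset.mem_univ rt)]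
    have he : ∑ x ∈ Finset.univ.erase rt, r x = ∑ x ∈ Finset.univ.erase rt, cf x :=
      Finset.sum_congr rfl fun x hx => hrne x (Finset.ne_of_mem_erase hx)
    rw [he, hrrt]
    ring
  have hbB : ∀ a, a ∈ B a := fun a => Finset.mem_filter.2 ⟨Finset.mem_univ a, ⟨0, rfl⟩⟩
  have hqk : ∀ a, q a / (k:ℝ) ≤ r a := by
    intro a
    by_cases ha : a = rt
    · rw [ha]
      have hq1 : q rt ≤ 1 := by
        rw [← hqs]
        exact Finset.single_le_sum (fun i _ => hq i) (Finset.mem_univ rt)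
      calc q rt / (k:ℝ) ≤ 1 / (k:ℝ) := by gcongr
        _ ≤ r rt := hrroot_ge
    · rw [hrne a ha]
      have h1 : q a ≤ ∑ b ∈ B a, q b :=
        Finset.single_le_sum (fun i _ => hq i) (hbB a)
      have h2 : q a / (k:ℝ) = (1/(k:ℝ)) * q a := by ring
      rw [h2, hcf]
      exact mul_le_mul_of_nonneg_left h1 (by positivity)
  -- main inequality
  have hBle : ∀ a b, b ∈ B a → ℓ a ≤ ℓ b := by
    intro a b hb
    obtain ⟨n, hn⟩ := (Finset.mem_filter.1 hb).2
    rw [← hn]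
    exact hpath n b
  have hterm : ∀ b, 0 ≤ q b * (ℓ b - ℓ rt) := fun b =>
    mul_nonneg (hq b) (sub_nonneg.2 (hroot_le b))
  have hdiamond : ∑ a ∈ Finset.univ.erase rt, cf a * (ℓ a - ℓ rt)
      ≤ ∑ b, q b * (ℓ b - ℓ rt) := by
    calc ∑ a ∈ Finset.univ.erase rt, cf a * (ℓ a - ℓ rt)
        = (1/(k:ℝ)) * ∑ a ∈ Finset.univ.erase rt, ∑ b ∈ B a, q b * (ℓ a - ℓ rt) := by
          rw [Finset.mul_sum]
          refine Finset.sum_congr rfl fun a _ => ?_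
          rw [← Finset.sum_mul, hcf]
          ring
      _ ≤ (1/(k:ℝ)) * ∑ a ∈ Finset.univ.erase rt, ∑ b ∈ B a, q b * (ℓ b - ℓ rt) := by
          refine mul_le_mul_of_nonneg_left ?_ (by positivity)
          refine Finset.sum_le_sum fun a _ => Finset.sum_le_sum fun b hb => ?_
          exact mul_le_mul_of_nonneg_left (sub_le_sub_right (hBle a b hb) _) (hq b)
      _ = (1/(k:ℝ)) * ∑ b, (((Finset.univ.erase rt).filter
            (fun a => ∃ n, par^[n] b = a)).card : ℝ) * (q b * (ℓ b - ℓ rt)) := by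
          congr 1
          calc ∑ a ∈ Finset.univ.erase rt, ∑ b ∈ B a, q b * (ℓ b - ℓ rt)
              = ∑ a ∈ Finset.univ.erase rt, ∑ b,
                  (if ∃ n, par^[n] b = a then q b * (ℓ b - ℓ rt) else 0) := by
                refine Finset.sum_congr rfl fun a _ => ?_
                rw [hB]
                rw [Finset.sum_filter]
            _ = ∑ b, ∑ a ∈ Finset.univ.erase rt,
                  (if ∃ n, par^[n] b = a then q b * (ℓ b - ℓ rt) else 0) := Finset.sum_comm
            _ = ∑ b, (((Finset.univ.erase rt).filter
                  (fun a => ∃ n, par^[n] b = a)).card : ℝ) * (q b * (ℓ b - ℓ rt)) := by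
                refine Finset.sum_congr rfl fun b _ => ?_
                rw [← Finset.sum_filter, Finset.sum_const, nsmul_eq_mul]
      _ ≤ (1/(k:ℝ)) * ∑ b, (k:ℝ) * (q b * (ℓ b - ℓ rt)) := by
          refine mul_le_mul_of_nonneg_left (Finset.sum_le_sum fun b _ => ?_) (by positivity)
          refine mul_le_mul_of_nonneg_right ?_ (hterm b)
          have hcard : ((Finset.univ.erase rt).filter
              (fun a => ∃ n, par^[n] b = a)).card ≤ k := by
            calc _ ≤ (Finset.univ : Finset (Fin k)).card :=
                  Finset.card_le_card (Finset.subset_univ _)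
              _ = k := by simp
          exact_mod_cast hcard
      _ = ∑ b, q b * (ℓ b - ℓ rt) := by
          rw [Finset.mul_sum]
          refine Finset.sum_congr rfl fun b _ => ?_
          field_simp
  have hfinal : ∑ a, r a * ℓ a ≤ ∑ a, q a * ℓ a := by
    have e1 : ∑ a, r a * ℓ a = ℓ rt + ∑ a ∈ Finset.univ.erase rt, cf a * (ℓ a - ℓ rt) := by
      rw [← Finset.add_sum_erase _ (fun a => r a * ℓ a) (Finset.mem_univ rt)]
      have he : ∑ x ∈ Finset.univ.erase rt, r x * ℓ x
          = ∑ x ∈ Finset.univ.erase rt, cf x * ℓ x :=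
        Finset.sum_congr rfl fun x hx => by rw [hrne x (Finset.ne_of_mem_erase hx)]
      have hexp : ∑ a ∈ Finset.univ.erase rt, cf a * (ℓ a - ℓ rt)
          = ∑ a ∈ Finset.univ.erase rt, cf a * ℓ a
            - (∑ a ∈ Finset.univ.erase rt, cf a) * ℓ rt := by
        rw [Finset.sum_mul, ← Finset.sum_sub_distrib]
        exact Finset.sum_congr rfl fun x _ => by ring
      rw [he, hrrt, hexp]
      ring
    have e2 : ∑ a, q a * ℓ a = ℓ rt + ∑ b, q b * (ℓ b - ℓ rt) := by
      have hexp : ∑ b, q b * (ℓ b - ℓ rt)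
          = ∑ b, q b * ℓ b - (∑ b, q b) * ℓ rt := by
        rw [Finset.sum_mul, ← Finset.sum_sub_distrib]
        exact Finset.sum_congr rfl fun x _ => by ring
      rw [hexp, hqs]
      ring
    rw [e1, e2]
    exact add_le_add_right hdiamond _
  refine ⟨r, hrnonneg, hsumr, ?_, hqk, T, ?_, ?_⟩
  · have hgoal : (∑ a, (r a - q a) * ∑ x, L a x * ν x)
        = ∑ a, r a * ℓ a - ∑ a, q a * ℓ a := by
      rw [← Finset.sum_sub_distrib]
      exact Finset.sum_congr rfl fun a _ => by rw [hℓ]; show _ = r a * lossV L a ν - q a * lossV L a ν; rw [lossV]; ring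
    rw [hgoal]
    linarith
  · intro e he
    obtain ⟨v, hv, rfl⟩ := mem_edges_iff.1 he
    exact (hTspec v hv).1
  · intro e he
    obtain ⟨v, hv, rfl⟩ := mem_edges_iff.1 he
    show r v ≤ r (par v)
    by_cases hpv : par v = rt
    · rw [hpv, hrne v hv]
      exact le_trans (hcle v) hrroot_ge
    · rw [hrne v hv, hrne (par v) hpv]
      have hsub : B v ⊆ B (par v) := by
        intro b hb
        obtain ⟨hbu, n, hn⟩ := Finset.mem_filter.1 hb
        refine Finset.mem_filter.2 ⟨hbu, n+1, ?_⟩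
        rw [Function.iterate_succ_apply', hn]
      rw [hcf]
      exact mul_le_mul_of_nonneg_left
        (Finset.sum_le_sum_of_subset_of_nonneg hsub (fun i _ _ => hq i)) (by positivity)
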